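/- For any mixed graph G without directed cycles, χ(G) ≤ 2·vc(G) + 1, where vc(G) is the vertex cover number of the underlying undirected graph. Moreover this bound is tight: the directed path of length 2ℓ has chromatic number 2ℓ+1 and vertex cover number ℓ. -/

import Mathlib

structure MixedGraph (V : Type) where
  Edge : V → V → Prop
  Arc : V → V → Prop
  edge_symm : ∀ u v, Edge u v → Edge v u
  edge_irrefl : ∀ v, ¬ Edge v v
  arc_irrefl : ∀ v, ¬ Arc v v
  not_edge_arc : ∀ u v, Arc u v → ¬ Edge u v

namespace MixedGraph

variable {V : Type}

/-- No directed cycles: the arc relation has no nontrivial closed walks. -/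
def Acyclic (G : MixedGraph V) : Prop := ∀ v, ¬ Relation.TransGen G.Arc v v

def Nminus (G : MixedGraph V) (v : V) : Set V := {u | G.Arc u v}
def Nplus (G : MixedGraph V) (v : V) : Set V := {u | G.Arc v u}
def Nu (G : MixedGraph V) (v : V) : Set V := {u | G.Edge u v}

/-- Two vertices have the same mixed neighborhood type. -/
def SameType (G : MixedGraph V) (u v : V) : Prop :=
  G.Nminus u = G.Nminus v ∧ G.Nplus u = G.Nplus v ∧ G.Nu u \ {v} = G.Nu v \ {u}

/-- Mixed neighborhood diversity: the number of mixed types. -/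
noncomputable def ndm (G : MixedGraph V) : ℕ := Nat.card (Quot G.SameType)

/-- The underlying undirected graph: arcs become edges. -/
def underlying (G : MixedGraph V) : SimpleGraph V where
  Adj u v := G.Edge u v ∨ G.Arc u v ∨ G.Arc v u
  symm := by
    refine ⟨?_⟩
    intro u v h
    rcases h with h | h | h
    · exact Or.inl (G.edge_symm u v h)
    · exact Or.inr (Or.inr h)
    · exact Or.inr (Or.inl h)
  loopless := by
    refine ⟨?_⟩
    intro v h
    rcases h with h | h | h
    · exact G.edge_irrefl v h
    · exact G.arc_irrefl v h
    · exact G.arc_irrefl v h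

/-- Same type in the underlying undirected graph. -/
def USameType (G : MixedGraph V) (u v : V) : Prop :=
  G.underlying.neighborSet u \ {v} = G.underlying.neighborSet v \ {u}

/-- Neighborhood diversity of the underlying undirected graph. -/
noncomputable def ndu (G : MixedGraph V) : ℕ := Nat.card (Quot G.USameType)

/-- A proper coloring: distinct colors across edges, increasing along arcs. -/
def ProperColoring (G : MixedGraph V) (c : V → ℕ) : Prop :=
  (∀ u v, G.Edge u v → c u ≠ c v) ∧ (∀ u v, G.Arc u v → c u < c v)

/-- Chromatic number: least `k` admitting a proper coloring with colors `0,…,k-1`. -/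
noncomputable def chi (G : MixedGraph V) : ℕ :=
  sInf {k | ∃ c : V → ℕ, G.ProperColoring c ∧ ∀ v, c v < k}

/-- Maxrank: the length of a longest directed path. -/
noncomputable def Lambda (G : MixedGraph V) : ℕ :=
  sSup {ℓ | ∃ p : ℕ → V, ∀ i < ℓ, G.Arc (p i) (p (i + 1))}

/-- Inrank of a vertex: the length of a longest directed path ending in it. -/
noncomputable def inrank (G : MixedGraph V) (v : V) : ℕ :=
  sSup {ℓ | ∃ p : ℕ → V, p ℓ = v ∧ ∀ i < ℓ, G.Arc (p i) (p (i + 1))}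

/-- A vertex cover of the underlying undirected graph (covers edges and arcs). -/
def IsVertexCover (G : MixedGraph V) (C : Finset V) : Prop :=
  ∀ u v, G.Edge u v ∨ G.Arc u v → u ∈ C ∨ v ∈ C

/-- Vertex cover number. -/
noncomputable def vc (G : MixedGraph V) : ℕ :=
  sInf {n | ∃ C : Finset V, C.card = n ∧ G.IsVertexCover C}

/-- Transitive closure of a mixed graph without directed cycles: all transitive
arcs are added, and edges parallel to arcs are removed. -/
def tc (G : MixedGraph V) (hG : G.Acyclic) : MixedGraph V where
  Edge u v := G.Edge u v ∧ ¬ Relation.TransGen G.Arc u v ∧ ¬ Relation.TransGen G.Arc v u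
  Arc u v := Relation.TransGen G.Arc u v
  edge_symm := fun u v h => ⟨G.edge_symm u v h.1, h.2.2, h.2.1⟩
  edge_irrefl := fun v h => G.edge_irrefl v h.1
  arc_irrefl := hG
  not_edge_arc := fun u v h hE => hE.2.1 h

/-- Induced mixed subgraph. -/
def induce (G : MixedGraph V) (S : Set V) : MixedGraph S where
  Edge u v := G.Edge u.1 v.1
  Arc u v := G.Arc u.1 v.1
  edge_symm := fun u v h => G.edge_symm u.1 v.1 h
  edge_irrefl := fun v => G.edge_irrefl v.1
  arc_irrefl := fun v => G.arc_irrefl v.1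
  not_edge_arc := fun u v => G.not_edge_arc u.1 v.1

/-- `I` is an independent set of the subgraph induced by `S`. -/
def IndepIn (G : MixedGraph V) (S I : Set V) : Prop :=
  I ⊆ S ∧ ∀ u ∈ I, ∀ v ∈ I, ¬ G.Edge u v ∧ ¬ G.Arc u v

/-- `I` is a maximal independent set of the subgraph induced by `S`. -/
def MaximalIndepIn (G : MixedGraph V) (S I : Set V) : Prop :=
  G.IndepIn S I ∧ ∀ J, G.IndepIn S J → I ⊆ J → J = I

/-- Clique number of the underlying undirected graph. -/
noncomputable def cliqueNum (G : MixedGraph V) : ℕ :=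
  sSup {n | ∃ s : Finset V, G.underlying.IsNClique n s}

end MixedGraph

lemma aux_upper (V : Type) [Fintype V] (G : MixedGraph V) (hG : G.Acyclic) :
    G.chi ≤ 2 * G.vc + 1 := by
  classical
  have hne : {n | ∃ C : Finset V, C.card = n ∧ G.IsVertexCover C}.Nonempty :=
    ⟨(Finset.univ : Finset V).card, Finset.univ, rfl, fun u v _ => Or.inl (Finset.mem_univ u)⟩
  obtain ⟨C, hCcard, hCcov⟩ : ∃ C : Finset V, C.card = G.vc ∧ G.IsVertexCover C :=
    Nat.sInf_mem hne
  set N := Fintype.card V with hN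
  set e : V → ℕ := fun v => (Fintype.equivFin V v : ℕ) with he
  have heinj : Function.Injective e := by
    intro a b h
    exact (Fintype.equivFin V).injective (Fin.ext h)
  have heN : ∀ v, e v < N := fun v => (Fintype.equivFin V v).isLt
  set r : V → ℕ := fun v => Set.ncard {w | Relation.TransGen G.Arc w v} with hrdef
  have hr : ∀ u v, G.Arc u v → r u < r v := by
    intro u v huv
    apply Set.ncard_lt_ncard
    · constructor
      · intro w hw
        exact Relation.TransGen.tail hw huv
      · intro hsub
        have hu : u ∈ {w | Relation.TransGen G.Arc w v} := Relation.TransGen.single huv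
        have : Relation.TransGen G.Arc u u := hsub hu
        exact hG u this
    · exact Set.toFinite _
  set n : V → ℕ := fun v => r v * N + e v with hn
  have hnarc : ∀ u v, G.Arc u v → n u < n v := by
    intro u v huv
    have h1 := hr u v huv
    have h2 := heN u
    simp only [hn]
    calc r u * N + e u < r u * N + N := by omega
    _ = (r u + 1) * N := by ring
    _ ≤ r v * N := Nat.mul_le_mul_right N h1
    _ ≤ r v * N + e v := Nat.le_add_right _ _
  have hninj : Function.Injective n := by
    intro a b h
    simp only [hn] at h
    have ha := heN a
    have hb := heN b
    rcases lt_trichotomy (r a) (r b) with hlt | heq | hlt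
    · exfalso
      have : (r a + 1) * N ≤ r b * N := Nat.mul_le_mul_right N hlt
      nlinarith
    · apply heinj; rw [heq] at h; omega
    · exfalso
      have : (r b + 1) * N ≤ r a * N := Nat.mul_le_mul_right N hlt
      nlinarith
  set f : V → ℕ := fun v => (Finset.univ.filter (fun u => u ∈ C ∧ n u ≤ n v)).card with hf
  have fmono : ∀ {u v}, n u ≤ n v → f u ≤ f v := by
    intro u v h
    apply Finset.card_le_card
    intro w hw
    simp only [Finset.mem_filter] at hw ⊢
    exact ⟨hw.1, hw.2.1, le_trans hw.2.2 h⟩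
  have fstep : ∀ {u v}, v ∈ C → n u < n v → f u < f v := by
    intro u v hv h
    apply Finset.card_lt_card
    constructor
    · intro w hw
      simp only [Finset.mem_filter] at hw ⊢
      exact ⟨hw.1, hw.2.1, le_trans hw.2.2 h.le⟩
    · intro hsub
      have : v ∈ Finset.univ.filter (fun u => u ∈ C ∧ n u ≤ n v) := by
        simp [hv]
      have := hsub this
      simp only [Finset.mem_filter] at this
      omega
  have fself : ∀ {v}, v ∈ C → 1 ≤ f v := by
    intro v hv
    have : v ∈ Finset.univ.filter (fun u => u ∈ C ∧ n u ≤ n v) := by simp [hv]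
    exact Finset.card_pos.mpr ⟨v, this⟩
  have fbound : ∀ v, f v ≤ C.card := by
    intro v
    apply Finset.card_le_card
    intro w hw
    simp only [Finset.mem_filter] at hw
    exact hw.2.1
  set c : V → ℕ := fun v => if v ∈ C then 2 * f v - 1 else 2 * f v with hc
  have hchi : G.chi ≤ 2 * C.card + 1 := by
    apply Nat.sInf_le
    refine ⟨c, ⟨?_, ?_⟩, ?_⟩
    · -- edges
      intro u v huv
      have hcov := hCcov u v (Or.inl huv)
      have hne' : u ≠ v := by
        rintro rfl
        exact G.edge_irrefl u huv
      have hnne : n u ≠ n v := fun h => hne' (hninj h)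
      simp only [hc]
      by_cases hu : u ∈ C <;> by_cases hv : v ∈ C <;> simp [hu, hv]
      · rcases lt_or_gt_of_ne hnne with h | h
        · have := fstep hv h
          have := fself hu
          omega
        · have := fstep hu h
          have := fself hv
          omega
      · have := fself hu
        omega
      · have := fself hv
        omega
      · tauto
    · -- arcs
      intro u v huv
      have hcov := hCcov u v (Or.inr huv)
      have hlt := hnarc u v huv
      simp only [hc]
      by_cases hu : u ∈ C <;> by_cases hv : v ∈ C <;> simp [hu, hv]
      · have := fstep hv hlt
        have := fself hu
        omega
      · have := fmono hlt.le
        have := fself hu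
        omega
      · have := fstep hv hlt
        omega
      · tauto
    · intro v
      have := fbound v
      simp only [hc]
      by_cases hv : v ∈ C <;> simp [hv] <;> omega
  omega

def pathG (ℓ : ℕ) : MixedGraph (Fin (2 * ℓ + 1)) where
  Edge := fun _ _ => False
  Arc := fun u v => (v : ℕ) = (u : ℕ) + 1
  edge_symm := fun _ _ h => h
  edge_irrefl := fun _ h => h
  arc_irrefl := fun v h => by omega
  not_edge_arc := fun _ _ _ h => h

lemma pathG_acyclic (ℓ : ℕ) : (pathG ℓ).Acyclic := by
  intro v h
  have key : ∀ a b : Fin (2 * ℓ + 1), Relation.TransGen (pathG ℓ).Arc a b → (a : ℕ) < b := by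
    intro a b hab
    induction hab with
    | single h => simp only [pathG] at h; omega
    | tail _ h ih => simp only [pathG] at h; omega
  have := key v v h
  omega

lemma pathG_chi (ℓ : ℕ) : (pathG ℓ).chi = 2 * ℓ + 1 := by
  have hmem : (2 * ℓ + 1) ∈ {k | ∃ c : Fin (2 * ℓ + 1) → ℕ,
      (pathG ℓ).ProperColoring c ∧ ∀ v, c v < k} := by
    refine ⟨fun v => (v : ℕ), ⟨fun u v h => h.elim, fun u v h => ?_⟩, fun v => v.isLt⟩
    simp only [pathG] at h
    show (u : ℕ) < (v : ℕ)
    omega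
  have hlb : ∀ k ∈ {k | ∃ c : Fin (2 * ℓ + 1) → ℕ,
      (pathG ℓ).ProperColoring c ∧ ∀ v, c v < k}, 2 * ℓ + 1 ≤ k := by
    rintro k ⟨c, ⟨_, harc⟩, hbd⟩
    have key : ∀ i : ℕ, (h : i ≤ 2 * ℓ) → i ≤ c ⟨i, by omega⟩ := by
      intro i
      induction i with
      | zero => intro _; omega
      | succ j ih =>
        intro h
        have harcj : (pathG ℓ).Arc ⟨j, by omega⟩ ⟨j + 1, by omega⟩ := rfl
        have := harc _ _ harcj
        have := ih (by omega)
        omega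
    have h1 := key (2 * ℓ) le_rfl
    have h2 := hbd ⟨2 * ℓ, by omega⟩
    omega
  apply le_antisymm (Nat.sInf_le hmem)
  exact hlb _ (Nat.sInf_mem ⟨_, hmem⟩)

lemma pathG_vc (ℓ : ℕ) : (pathG ℓ).vc = ℓ := by
  classical
  set C : Finset (Fin (2 * ℓ + 1)) :=
    Finset.univ.image (fun i : Fin ℓ => (⟨2 * (i : ℕ) + 1, by omega⟩ : Fin (2 * ℓ + 1))) with hC
  have hCcard : C.card = ℓ := by
    rw [hC, Finset.card_image_of_injective]
    · simp
    · intro a b h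
      have := Fin.mk.injEq (2 * (a : ℕ) + 1) _ (2 * (b : ℕ) + 1) _ ▸ h
      have h' : 2 * (a : ℕ) + 1 = 2 * (b : ℕ) + 1 := congrArg Fin.val h
      exact Fin.ext (by omega)
  have hCcov : (pathG ℓ).IsVertexCover C := by
    intro u v h
    rcases h with h | h
    · exact h.elim
    · simp only [pathG] at h
      rcases Nat.even_or_odd (u : ℕ) with ⟨i, hi⟩ | ⟨i, hi⟩
      · -- u even, v = u + 1 odd
        right
        have hv : (v : ℕ) = 2 * i + 1 := by omega
        have hiℓ : i < ℓ := by have := v.isLt; omega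
        rw [hC]
        simp only [Finset.mem_image, Finset.mem_univ, true_and]
        exact ⟨⟨i, hiℓ⟩, Fin.ext (by simp [hv])⟩
      · -- u odd
        left
        have hiℓ : i < ℓ := by have := v.isLt; omega
        rw [hC]
        simp only [Finset.mem_image, Finset.mem_univ, true_and]
        exact ⟨⟨i, hiℓ⟩, Fin.ext (by simp; omega)⟩
  have hlb : ∀ D : Finset (Fin (2 * ℓ + 1)), (pathG ℓ).IsVertexCover D → ℓ ≤ D.card := by
    intro D hD
    set g : Fin ℓ → Fin (2 * ℓ + 1) := fun i =>
      if (⟨2 * (i : ℕ), by omega⟩ : Fin (2 * ℓ + 1)) ∈ D then ⟨2 * (i : ℕ), by omega⟩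
      else ⟨2 * (i : ℕ) + 1, by omega⟩ with hg
    have hgD : ∀ i, g i ∈ D := by
      intro i
      rw [hg]
      by_cases h : (⟨2 * (i : ℕ), by omega⟩ : Fin (2 * ℓ + 1)) ∈ D
      · simpa [h] using h
      · simp only [h, if_false]
        have harc : (pathG ℓ).Arc ⟨2 * (i : ℕ), by omega⟩ ⟨2 * (i : ℕ) + 1, by omega⟩ := rfl
        rcases hD _ _ (Or.inr harc) with h' | h'
        · exact absurd h' h
        · exact h'
    have hgval : ∀ i : Fin ℓ, (g i : ℕ) = 2 * (i : ℕ) ∨ (g i : ℕ) = 2 * (i : ℕ) + 1 := by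
      intro i
      rw [hg]
      by_cases h : (⟨2 * (i : ℕ), by omega⟩ : Fin (2 * ℓ + 1)) ∈ D <;> simp [h]
    have hginj : Function.Injective g := by
      intro a b h
      have ha := hgval a
      have hb := hgval b
      have : (g a : ℕ) = (g b : ℕ) := congrArg Fin.val h
      exact Fin.ext (by omega)
    calc ℓ = (Finset.univ : Finset (Fin ℓ)).card := by simp
    _ ≤ D.card := Finset.card_le_card_of_injOn g (fun i _ => hgD i) (hginj.injOn)
  have hmem : ℓ ∈ {n | ∃ C : Finset (Fin (2 * ℓ + 1)), C.card = n ∧ (pathG ℓ).IsVertexCover C} :=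
    ⟨C, hCcard, hCcov⟩
  apply le_antisymm (Nat.sInf_le hmem)
  obtain ⟨D, hDcard, hDcov⟩ := Nat.sInf_mem (⟨ℓ, hmem⟩ :
    Set.Nonempty {n | ∃ C : Finset (Fin (2 * ℓ + 1)), C.card = n ∧ (pathG ℓ).IsVertexCover C})
  rw [← hDcard]
  exact hlb D hDcov

lemma aux_path (ℓ : ℕ) : ∃ P : MixedGraph (Fin (2 * ℓ + 1)),
    (P.Edge = fun _ _ => False) ∧
    (P.Arc = fun (u v : Fin (2 * ℓ + 1)) => (v : ℕ) = (u : ℕ) + 1) ∧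
    P.Acyclic ∧ P.chi = 2 * ℓ + 1 ∧ P.vc = ℓ :=
  ⟨pathG ℓ, rfl, rfl, pathG_acyclic ℓ, pathG_chi ℓ, pathG_vc ℓ⟩

theorem stmt10 :
    (∀ (V : Type) [Fintype V], ∀ G : MixedGraph V, G.Acyclic → G.chi ≤ 2 * G.vc + 1) ∧
    ∀ ℓ : ℕ, ∃ P : MixedGraph (Fin (2 * ℓ + 1)),
      (P.Edge = fun _ _ => False) ∧
      (P.Arc = fun (u v : Fin (2 * ℓ + 1)) => (v : ℕ) = (u : ℕ) + 1) ∧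
      P.Acyclic ∧ P.chi = 2 * ℓ + 1 ∧ P.vc = ℓ :=
  ⟨fun V _ G hG => aux_upper V G hG, aux_path⟩
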